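/- Fix integers K ≥ m ≥ 1, ε > 0, c : T_{K,m} → [0,1/K], and x ∈ [0,1]^K. If during the run of the partition algorithm on x the assignment P ← P̂ occurs (i.e., P̂ is visited by the while loop), then x obeys all the inequalities of the DOP P̂: for every pair of consecutive parts S_a > S_b of P̂, one has min_{k∈S_a} x(k) ≥ max_{ℓ∈S_b} x(ℓ). -/

import Mathlib

open Classical

noncomputable section

namespace MPB

variable (K m : ℕ)

/-- Max of `x` over a finite set of coordinates. -/
def fmax (x : Fin K → ℝ) (S : Finset (Fin K)) : ℝ := sSup (x '' ↑S)

/-- Min of `x` over a finite set of coordinates. -/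
def fmin (x : Fin K → ℝ) (S : Finset (Fin K)) : ℝ := sInf (x '' ↑S)

/-- range_B(x) = max_{k∈B} x(k) - min_{k∈B} x(k). -/
def rangeX (x : Fin K → ℝ) (B : Finset (Fin K)) : ℝ := fmax K x B - fmin K x B

/-- gap of the child obtained by splitting `B` into `T > B \ T`:
gap = min_{k∈T} x(k) - max_{ℓ∈B\T} x(ℓ). -/
def gapX (x : Fin K → ℝ) (T B : Finset (Fin K)) : ℝ := fmin K x T - fmax K x (B \ T)

/-- i(P): the largest `i` such that the first `i` parts of the ordered partition `L`
have total size at most `m`. -/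
def iIdx (L : List (Finset (Fin K))) : ℕ :=
  Nat.findGreatest (fun i => ((L.take i).map Finset.card).sum ≤ m) L.length

/-- A(P): the union of the first i(P) parts (the coordinates already identified as
belonging to the top m). -/
def Aset (L : List (Finset (Fin K))) : Finset (Fin K) :=
  (L.take (iIdx K m L)).foldr (· ∪ ·) ∅

/-- B(P): the currently undecided part; `∅` if `|A(P)| = m`, else the part S_{i(P)+1}. -/
def Bset (L : List (Finset (Fin K))) : Finset (Fin K) :=
  if (Aset K m L).card = m then ∅ else L.getD (iIdx K m L) ∅

/-- A vertex of the tree T_{K,m} is encoded by the sequence of splits leading to it from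
the root (head = most recently chosen top part): this recovers its underlying ordered
partition, by splitting at each step the then-current undecided set B into `T > B \ T`. -/
def partitionOf : List (Finset (Fin K)) → List (Finset (Fin K))
  | [] => [Finset.univ]
  | T :: l =>
    let L := partitionOf l
    let i := iIdx K m L
    L.take i ++ [T, L.getD i ∅ \ T] ++ L.drop (i + 1)

/-- A(P) for a vertex of T_{K,m}. -/
def Anode (l : List (Finset (Fin K))) : Finset (Fin K) := Aset K m (partitionOf K m l)

/-- B(P) for a vertex of T_{K,m}. -/
def Bnode (l : List (Finset (Fin K))) : Finset (Fin K) := Bset K m (partitionOf K m l)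

/-- Membership in T_{K,m}: each successive split must cut the current undecided set B
into a nonempty strict subset (the new top part) and the rest. The root is `[]`, a
vertex is a leaf iff its `Bnode` is empty, `T :: l` is a child of `l`, and the ancestors
of a vertex are exactly its list suffixes. -/
def Valid : List (Finset (Fin K)) → Prop
  | [] => True
  | T :: l => Valid l ∧ T.Nonempty ∧ T ⊂ Bnode K m l

/-- The elements of `B` sorted by `x` in (weakly) decreasing order,
ties broken by coordinate index (stability of merge sort). -/
def sortedB (x : Fin K → ℝ) (B : Finset (Fin K)) : List (Fin K) :=
  (B.sort (· ≤ ·)).mergeSort (fun a b => decide (x b ≤ x a))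

/-- The set `{a_1, …, a_j}` of the `j` largest coordinates of `B` under `x`. -/
def topSet (x : Fin K → ℝ) (B : Finset (Fin K)) (j : ℕ) : Finset (Fin K) :=
  ((sortedB K x B).take j).toFinset

/-- Line 7 of Algorithm 1: the algorithm, currently at the vertex `l`, returns `l`
because for some ancestor `q ⪯ l` and some child `q_j` of `q` (splitting B(q) at the
`j`-th position of the `x`-sorted order), the quantity `gap_{q_j}(x) - c(q)·range_q(x)`
is within `(d(l,q)+1)·6ε` of zero. -/
def stopAt (c : List (Finset (Fin K)) → ℝ) (ε : ℝ) (x : Fin K → ℝ)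
    (l : List (Finset (Fin K))) : Prop :=
  ∃ q ∈ l.tails, ∃ j, 1 ≤ j ∧ j < (Bnode K m q).card ∧
    |gapX K x (topSet K x (Bnode K m q) j) (Bnode K m q) - c q * rangeX K x (Bnode K m q)|
      ≤ ((l.length - q.length + 1 : ℕ) : ℝ) * (6 * ε)

/-- Lines 10-15 of Algorithm 1: move from `l` to the child `l_j` for the smallest
`j ∈ {1, …, ℓ-1}` with `gap_{l_j}(x) ≥ c(l)·range_l(x)`. -/
def descend (c : List (Finset (Fin K)) → ℝ) (x : Fin K → ℝ)
    (l : List (Finset (Fin K))) : List (Finset (Fin K)) :=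
  if h : ∃ j, 1 ≤ j ∧ j < (Bnode K m l).card ∧
      c l * rangeX K x (Bnode K m l)
        ≤ gapX K x (topSet K x (Bnode K m l) j) (Bnode K m l)
  then topSet K x (Bnode K m l) (Nat.find h) :: l
  else l

/-- The while loop of Algorithm 1, with fuel (the tree T_{K,m} has depth < K, so fuel K
suffices for the loop to terminate as in the paper). -/
def run (c : List (Finset (Fin K)) → ℝ) (ε : ℝ) (x : Fin K → ℝ) :
    ℕ → List (Finset (Fin K)) → List (Finset (Fin K))
  | 0, l => l
  | n + 1, l =>
    if Bnode K m l = ∅ then l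
    else if stopAt K m c ε x l then l
    else run c ε x n (descend K m c x l)

/-- The vertex P_{c,ε}(x) ∈ T_{K,m} output by Algorithm 1 on input x. The vertices
visited by the while loop are exactly the suffixes of the output. -/
def Pmap (c : List (Finset (Fin K)) → ℝ) (ε : ℝ) (x : Fin K → ℝ) :
    List (Finset (Fin K)) :=
  run K m c ε x K []

/-! ### Auxiliary lemmas -/

section Aux

variable {K m : ℕ}

lemma fmin_le {x : Fin K → ℝ} {S : Finset (Fin K)} {k : Fin K} (hk : k ∈ S) :
    fmin K x S ≤ x k :=
  csInf_le (S.finite_toSet.image x).bddBelow ⟨k, hk, rfl⟩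

lemma le_fmax {x : Fin K → ℝ} {S : Finset (Fin K)} {k : Fin K} (hk : k ∈ S) :
    x k ≤ fmax K x S :=
  le_csSup (S.finite_toSet.image x).bddAbove ⟨k, hk, rfl⟩

lemma fmin_mem {x : Fin K → ℝ} {S : Finset (Fin K)} (hS : S.Nonempty) :
    ∃ k ∈ S, fmin K x S = x k := by
  have h : sInf (x '' ↑S) ∈ x '' ↑S :=
    Set.Nonempty.csInf_mem ((Finset.coe_nonempty.mpr hS).image x) (S.finite_toSet.image x)
  obtain ⟨k, hk, hkx⟩ := h
  exact ⟨k, hk, hkx.symm⟩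

lemma fmax_mem {x : Fin K → ℝ} {S : Finset (Fin K)} (hS : S.Nonempty) :
    ∃ k ∈ S, fmax K x S = x k := by
  have h : sSup (x '' ↑S) ∈ x '' ↑S :=
    Set.Nonempty.csSup_mem ((Finset.coe_nonempty.mpr hS).image x) (S.finite_toSet.image x)
  obtain ⟨k, hk, hkx⟩ := h
  exact ⟨k, hk, hkx.symm⟩

lemma fmin_mono {x : Fin K → ℝ} {T S : Finset (Fin K)} (hTS : T ⊆ S) (hT : T.Nonempty) :
    fmin K x S ≤ fmin K x T := by
  obtain ⟨k, hk, hke⟩ := fmin_mem (x := x) hT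
  rw [hke]
  exact fmin_le (hTS hk)

lemma fmax_mono {x : Fin K → ℝ} {T S : Finset (Fin K)} (hTS : T ⊆ S) (hT : T.Nonempty) :
    fmax K x T ≤ fmax K x S := by
  obtain ⟨k, hk, hke⟩ := fmax_mem (x := x) hT
  rw [hke]
  exact le_fmax (hTS hk)

lemma sortedB_perm (x : Fin K → ℝ) (B : Finset (Fin K)) :
    (sortedB K x B).Perm (B.sort (· ≤ ·)) :=
  List.mergeSort_perm _ _

lemma sortedB_nodup (x : Fin K → ℝ) (B : Finset (Fin K)) : (sortedB K x B).Nodup :=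
  ((sortedB_perm x B).nodup_iff).mpr (B.sort_nodup _)

lemma mem_sortedB {x : Fin K → ℝ} {B : Finset (Fin K)} {k : Fin K} :
    k ∈ sortedB K x B ↔ k ∈ B := by
  rw [(sortedB_perm x B).mem_iff, Finset.mem_sort]

lemma sortedB_length (x : Fin K → ℝ) (B : Finset (Fin K)) :
    (sortedB K x B).length = B.card := by
  rw [(sortedB_perm x B).length_eq, Finset.length_sort]

lemma sortedB_pairwise (x : Fin K → ℝ) (B : Finset (Fin K)) :
    (sortedB K x B).Pairwise (fun a b => x b ≤ x a) := by
  have h := List.pairwise_mergeSort (le := fun a b => decide (x b ≤ x a))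
    (by intro a b c hab hbc; simp only [decide_eq_true_eq] at *; exact le_trans hbc hab)
    (by intro a b; simpa using le_total (x b) (x a)) (B.sort (· ≤ ·))
  exact h.imp (by intro a b hb; simpa using hb)

lemma topSet_subset (x : Fin K → ℝ) (B : Finset (Fin K)) (j : ℕ) :
    topSet K x B j ⊆ B := by
  intro k hk
  rw [topSet, List.mem_toFinset] at hk
  exact mem_sortedB.mp (List.mem_of_mem_take hk)

lemma topSet_nonempty {x : Fin K → ℝ} {B : Finset (Fin K)} {j : ℕ}
    (h1 : 1 ≤ j) (h2 : j ≤ B.card) : (topSet K x B j).Nonempty := by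
  have hlen : 0 < ((sortedB K x B).take j).length := by
    rw [List.length_take, sortedB_length]; omega
  obtain ⟨a, ha⟩ := List.exists_mem_of_length_pos hlen
  exact ⟨a, List.mem_toFinset.mpr ha⟩

lemma sdiff_topSet (x : Fin K → ℝ) (B : Finset (Fin K)) (j : ℕ) :
    B \ topSet K x B j = ((sortedB K x B).drop j).toFinset := by
  have hnd := sortedB_nodup x B
  have hsplit := List.take_append_drop j (sortedB K x B)
  have hdisj : ∀ k, k ∈ (sortedB K x B).take j → k ∉ (sortedB K x B).drop j := by
    have := hnd
    rw [← hsplit] at this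
    have := (List.nodup_append'.mp this).2.2
    intro k hk1 hk2
    exact this hk1 hk2
  ext k
  simp only [Finset.mem_sdiff, topSet, List.mem_toFinset]
  constructor
  · rintro ⟨hkB, hkT⟩
    have : k ∈ (sortedB K x B).take j ++ (sortedB K x B).drop j := by
      rw [hsplit]; exact mem_sortedB.mpr hkB
    rcases List.mem_append.mp this with h | h
    · exact absurd h hkT
    · exact h
  · intro hk
    refine ⟨?_, fun hkT => hdisj k hkT hk⟩
    apply mem_sortedB.mp
    rw [← hsplit]
    exact List.mem_append.mpr (Or.inr hk)

lemma sdiff_topSet_nonempty {x : Fin K → ℝ} {B : Finset (Fin K)} {j : ℕ}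
    (h2 : j < B.card) : (B \ topSet K x B j).Nonempty := by
  rw [sdiff_topSet]
  have hlen : 0 < ((sortedB K x B).drop j).length := by
    rw [List.length_drop, sortedB_length]; omega
  obtain ⟨a, ha⟩ := List.exists_mem_of_length_pos hlen
  exact ⟨a, List.mem_toFinset.mpr ha⟩

lemma fmax_sdiff_le_fmin_topSet {x : Fin K → ℝ} {B : Finset (Fin K)} {j : ℕ}
    (h1 : 1 ≤ j) (h2 : j < B.card) :
    fmax K x (B \ topSet K x B j) ≤ fmin K x (topSet K x B j) := by
  obtain ⟨a, ha, hae⟩ := fmin_mem (x := x) (topSet_nonempty h1 h2.le)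
  obtain ⟨b, hb, hbe⟩ := fmax_mem (x := x) (sdiff_topSet_nonempty (x := x) h2)
  rw [hae, hbe]
  have hpw := sortedB_pairwise x B
  rw [← List.take_append_drop j (sortedB K x B), List.pairwise_append] at hpw
  have ha' : a ∈ (sortedB K x B).take j := List.mem_toFinset.mp ha
  have hb' : b ∈ (sortedB K x B).drop j := by
    rw [sdiff_topSet] at hb
    exact List.mem_toFinset.mp hb
  exact hpw.2.2 a ha' b hb'

lemma Bnode_eq_getD {l : List (Finset (Fin K))} (h : (Bnode K m l).Nonempty) :
    Bnode K m l = (partitionOf K m l).getD (iIdx K m (partitionOf K m l)) ∅ := by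
  by_cases hcond : (Aset K m (partitionOf K m l)).card = m
  · exfalso
    have : Bnode K m l = ∅ := by simp [Bnode, Bset, hcond]
    rw [this] at h
    exact Finset.not_nonempty_empty h
  · simp [Bnode, Bset, hcond]

lemma iIdx_lt_length {l : List (Finset (Fin K))} (h : (Bnode K m l).Nonempty) :
    iIdx K m (partitionOf K m l) < (partitionOf K m l).length := by
  by_contra hc
  push_neg at hc
  rw [Bnode_eq_getD h, List.getD_eq_default _ _ hc] at h
  exact Finset.not_nonempty_empty h

/-- The vertices actually reachable by the algorithm: each step conses a `topSet`. -/
inductive Reach (x : Fin K → ℝ) : List (Finset (Fin K)) → Prop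
  | nil : Reach x []
  | cons (l : List (Finset (Fin K))) (j : ℕ) (h1 : 1 ≤ j) (h2 : j < (Bnode K m l).card)
      (hr : Reach x l) : Reach x (topSet K x (Bnode K m l) j :: l)

lemma reach_descend {c : List (Finset (Fin K)) → ℝ} {x : Fin K → ℝ}
    {l : List (Finset (Fin K))} (hr : Reach (m := m) x l) :
    Reach (m := m) x (descend K m c x l) := by
  rw [descend]
  split
  · next h =>
    obtain ⟨h1, h2, _⟩ := Nat.find_spec h
    exact Reach.cons l (Nat.find h) h1 h2 hr
  · exact hr

lemma reach_run {c : List (Finset (Fin K)) → ℝ} {ε : ℝ} {x : Fin K → ℝ} (n : ℕ)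
    {l : List (Finset (Fin K))} (hr : Reach (m := m) x l) :
    Reach (m := m) x (run K m c ε x n l) := by
  induction n generalizing l with
  | zero => exact hr
  | succ n ih =>
    rw [run]
    split
    · exact hr
    · split
      · exact hr
      · exact ih (reach_descend hr)

lemma reach_suffix {x : Fin K → ℝ} {l l' : List (Finset (Fin K))}
    (hr : Reach (m := m) x l) (hs : l' <:+ l) : Reach (m := m) x l' := by
  induction hr with
  | nil =>
    rw [List.suffix_nil.mp hs]
    exact Reach.nil
  | cons l j h1 h2 hr ih =>
    rcases List.suffix_cons_iff.mp hs with h | h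
    · rw [h]; exact Reach.cons l j h1 h2 hr
    · exact ih h

/-- The chain condition preserved by the algorithm. -/
lemma reach_good (hK : 0 < K) {x : Fin K → ℝ} {l : List (Finset (Fin K))}
    (hr : Reach (m := m) x l) :
    (∀ S ∈ partitionOf K m l, S.Nonempty) ∧
      List.Chain' (fun S S' => fmax K x S' ≤ fmin K x S) (partitionOf K m l) := by
  induction hr with
  | nil =>
    constructor
    · intro S hS
      simp only [partitionOf, List.mem_singleton] at hS
      rw [hS]
      have : Nonempty (Fin K) := ⟨⟨0, hK⟩⟩
      exact Finset.univ_nonempty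
    · simp [partitionOf, List.Chain', List.isChain_singleton]
  | cons l j h1 h2 hr ih =>
    obtain ⟨hne, hch⟩ := ih
    set L := partitionOf K m l with hLdef
    set i := iIdx K m L with hidef
    set B := Bnode K m l with hBdef
    have hBne : B.Nonempty := Finset.card_pos.mp (by omega)
    have hBeq : B = L.getD i ∅ := Bnode_eq_getD hBne
    have hi : i < L.length := iIdx_lt_length hBne
    set T := topSet K x B j with hTdef
    have hpart : partitionOf K m (T :: l) = L.take i ++ [T, B \ T] ++ L.drop (i + 1) := by
      rw [partitionOf]
      simp only [← hLdef, ← hidef, ← hBeq]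
    have hBi : B = L[i] := by rw [hBeq, List.getD_eq_getElem _ _ hi]
    have hLsplit : L.take i ++ B :: L.drop (i + 1) = L := by
      rw [hBi, ← List.drop_eq_getElem_cons hi, List.take_append_drop]
    have hTsub : T ⊆ B := topSet_subset x B j
    have hTne : T.Nonempty := topSet_nonempty h1 h2.le
    have hBTne : (B \ T).Nonempty := sdiff_topSet_nonempty h2
    have hkey : fmax K x (B \ T) ≤ fmin K x T := fmax_sdiff_le_fmin_topSet h1 h2
    -- old chain decomposition
    rw [← hLsplit] at hch
    unfold List.Chain' at hch
    rw [List.isChain_append] at hch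
    obtain ⟨hch1, hch2, hch3⟩ := hch
    rw [List.isChain_cons] at hch2
    obtain ⟨hhead, hchdrop⟩ := hch2
    have hpart' : partitionOf K m (T :: l)
        = List.take i L ++ (T :: (B \ T) :: List.drop (i + 1) L) := by
      rw [hpart, List.append_assoc]
      rfl
    constructor
    · intro S hS
      rw [hpart'] at hS
      rcases List.mem_append.mp hS with h | h
      · exact hne S (by rw [← hLsplit]; exact List.mem_append.mpr (Or.inl h))
      · rcases List.mem_cons.mp h with h' | h'
        · rw [h']; exact hTne
        · rcases List.mem_cons.mp h' with h'' | h''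
          · rw [h'']; exact hBTne
          · refine hne S ?_
            rw [← hLsplit]
            exact List.mem_append.mpr (Or.inr (List.mem_cons.mpr (Or.inr h'')))
    · unfold List.Chain'; rw [hpart', List.isChain_append]
      refine ⟨hch1, ?_, ?_⟩
      · rw [List.isChain_cons_cons, List.isChain_cons]
        refine ⟨hkey, ?_, hchdrop⟩
        intro y hy
        calc fmax K x y ≤ fmin K x B := hhead y hy
          _ ≤ fmin K x (B \ T) := fmin_mono Finset.sdiff_subset hBTne
      · intro a ha y hy
        simp only [List.head?_cons, Option.mem_def, Option.some.injEq] at hy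
        rw [← hy]
        calc fmax K x T ≤ fmax K x B := fmax_mono hTsub hTne
          _ ≤ fmin K x a := hch3 a ha B (by simp)

end Aux

/-- Lemma 2.5, item 1: every vertex P̂ visited by the while loop of the algorithm run on
x (i.e. every suffix of the output) has x obeying all its inequalities: for every pair
of consecutive parts S_a > S_b of the ordered partition of P̂,
min_{k∈S_a} x(k) ≥ max_{ℓ∈S_b} x(ℓ). -/
theorem stmt7 (K m : ℕ) (hm : 1 ≤ m) (hK : m ≤ K) (ε : ℝ) (hε : 0 < ε)
    (c : List (Finset (Fin K)) → ℝ)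
    (hc : ∀ l, Valid K m l → c l ∈ Set.Icc (0 : ℝ) (1 / K))
    (x : Fin K → ℝ) (hx : ∀ i, x i ∈ Set.Icc (0 : ℝ) 1)
    (Phat : List (Finset (Fin K))) (hvisit : Phat <:+ Pmap K m c ε x) :
    ∀ a : ℕ, a + 1 < (partitionOf K m Phat).length →
      fmax K x ((partitionOf K m Phat).getD (a + 1) ∅)
        ≤ fmin K x ((partitionOf K m Phat).getD a ∅) := by
  have hK0 : 0 < K := lt_of_lt_of_le hm hK
  have hreach : Reach (K := K) (m := m) x Phat :=
    reach_suffix (reach_run K Reach.nil) hvisit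
  obtain ⟨-, hch⟩ := reach_good hK0 hreach
  intro a ha
  unfold List.Chain' at hch
  rw [List.isChain_iff_getElem] at hch
  have ha' : a < (partitionOf K m Phat).length - 1 := by omega
  have := hch a ha
  rw [List.getD_eq_getElem _ _ ha, List.getD_eq_getElem _ _
    (by omega : a < (partitionOf K m Phat).length)]
  simpa using this

end MPB
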